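/- arXiv:2201.00695 — 3 statements merged into one kernel-verified Lean document; each statement's English description precedes it below -/
import Mathlib

section
/- Gumbel top-k (sampling without replacement): Let s₁,...,s_N be real numbers and G₁,...,G_N i.i.d. standard Gumbel. Let r = (r₁,...,r_N) be the permutation sorting the perturbed values sᵢ + Gᵢ in decreasing order. Then for any permutation σ of {1,...,N}, P(r = σ) = ∏ₜ₌₁^N exp(s_{σ(t)}) / Σ_{j ∉ {σ(1),...,σ(t-1)}} exp(s_j), i.e., r is distributed as an ordered sample without replacement from the categorical distribution with probabilities proportional to exp(sᵢ). -/
section GumbelAux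
open MeasureTheory Set Filter


noncomputable def gpdf (x : ℝ) : ℝ := Real.exp (-x - Real.exp (-x))

lemma gpdf_eq (x : ℝ) : gpdf x = Real.exp (-x) * Real.exp (-Real.exp (-x)) := by
  rw [gpdf, ← Real.exp_add]; ring_nf

noncomputable def gumbelM : Measure ℝ := volume.withDensity fun x => ENNReal.ofReal (gpdf x)

lemma hasDerivAt_gF (b x : ℝ) :
    HasDerivAt (fun x => Real.exp (-b * Real.exp (-x)))
      (b * Real.exp (-x) * Real.exp (-b * Real.exp (-x))) x := by
  have h : HasDerivAt (fun x : ℝ => -b * Real.exp (-x)) (b * Real.exp (-x)) x := by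
    have : HasDerivAt (fun y : ℝ => -b * Real.exp (-y)) (-b * (Real.exp (-x) * -1)) x :=
      ((hasDerivAt_id x).neg.exp).const_mul (-b)
    convert this using 1
    ring
  have := h.exp
  convert this using 1
  ring

lemma gcore_bound (b : ℝ) (hb : 0 < b) (x : ℝ) :
    b * Real.exp (-x) * Real.exp (-b * Real.exp (-x)) ≤ 4 / b * Real.exp x := by
  rw [neg_mul]
  set t := b * Real.exp (-x) with ht
  have htpos : 0 < t := mul_pos hb (Real.exp_pos _)
  have h1 : t ^ 2 / 4 ≤ Real.exp t := by
    have h2 : t / 2 + 1 ≤ Real.exp (t / 2) := by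
      have := Real.add_one_le_exp (t / 2); linarith
    have h3 : (t / 2 + 1) ^ 2 ≤ Real.exp (t / 2) ^ 2 :=
      pow_le_pow_left₀ (by positivity) h2 2
    rw [← Real.exp_nat_mul] at h3
    norm_num at h3
    rw [show (2:ℝ) * (t/2) = t by ring] at h3
    nlinarith [sq_nonneg t]
  have h4 : t * Real.exp (-t) ≤ 4 / t := by
    have h5 : (Real.exp t)⁻¹ ≤ (t ^ 2 / 4)⁻¹ :=
      inv_anti₀ (by positivity) h1
    rw [Real.exp_neg]
    calc t * (Real.exp t)⁻¹ ≤ t * (t ^ 2 / 4)⁻¹ := by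
          exact mul_le_mul_of_nonneg_left h5 htpos.le
      _ = 4 / t := by field_simp
  calc t * Real.exp (-t) ≤ 4 / t := h4
    _ = 4 / b * Real.exp x := by
        rw [ht, Real.exp_neg]; field_simp

lemma gcore_integrableOn (b : ℝ) (hb : 0 < b) (c : ℝ) :
    IntegrableOn (fun x => b * Real.exp (-x) * Real.exp (-b * Real.exp (-x))) (Iic c) := by
  have hg : IntegrableOn (fun x => 4 / b * Real.exp x) (Iic c) :=
    (integrableOn_exp_Iic c).const_mul _
  refine Integrable.mono hg ?_ ?_
  · exact (Continuous.aestronglyMeasurable (by continuity)).restrict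
  · refine ae_of_all _ fun x => ?_
    have h1 := gcore_bound b hb x
    have h2 : 0 ≤ b * Real.exp (-x) * Real.exp (-b * Real.exp (-x)) := by positivity
    rw [Real.norm_eq_abs, Real.norm_eq_abs, abs_of_nonneg h2, abs_of_nonneg (by positivity)]
    exact h1

lemma gcore_tendsto (b : ℝ) (hb : 0 < b) :
    Tendsto (fun x => Real.exp (-b * Real.exp (-x))) atBot (nhds 0) := by
  apply Real.tendsto_exp_atBot.comp
  have h1 : Tendsto (fun x : ℝ => Real.exp (-x)) atBot atTop :=
    Real.tendsto_exp_atTop.comp tendsto_neg_atBot_atTop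
  have h2 : Tendsto (fun x : ℝ => b * Real.exp (-x)) atBot atTop :=
    h1.const_mul_atTop hb
  have h3 := tendsto_neg_atTop_atBot.comp h2
  exact h3.congr fun x => by simp [Function.comp, neg_mul]

lemma gcore_integral (b : ℝ) (hb : 0 < b) (c : ℝ) :
    ∫ x in Iic c, b * Real.exp (-x) * Real.exp (-b * Real.exp (-x)) =
      Real.exp (-b * Real.exp (-c)) := by
  rw [integral_Iic_of_hasDerivAt_of_tendsto' (fun x _ => hasDerivAt_gF b x)
    (gcore_integrableOn b hb c) (gcore_tendsto b hb)]
  ring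

lemma gpdf_pos (x : ℝ) : 0 < gpdf x := Real.exp_pos _

lemma gpdf_cont : Continuous gpdf := by unfold gpdf; continuity

lemma gpdf_meas : Measurable fun x => ENNReal.ofReal (gpdf x) :=
  ENNReal.measurable_ofReal.comp gpdf_cont.measurable

lemma real_eq (A C x : ℝ) (hA : 0 ≤ A) :
    gpdf x * (C * Real.exp (-A * Real.exp (-x))) =
      C / (1 + A) * ((1 + A) * Real.exp (-x) * Real.exp (-(1 + A) * Real.exp (-x))) := by
  have h1A : (0:ℝ) < 1 + A := by linarith
  rw [gpdf_eq]
  rw [show -(1 + A) * Real.exp (-x) = -Real.exp (-x) + -A * Real.exp (-x) by ring,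
    Real.exp_add]
  field_simp

lemma gumbel_lint (A C c : ℝ) (hA : 0 ≤ A) (hC : 0 ≤ C) :
    ∫⁻ a in Iic c, ENNReal.ofReal (C * Real.exp (-A * Real.exp (-a))) ∂gumbelM
      = ENNReal.ofReal (C / (1 + A) * Real.exp (-(1 + A) * Real.exp (-c))) := by
  have h1A : (0:ℝ) < 1 + A := by linarith
  have hmeas2 : Measurable fun a : ℝ => ENNReal.ofReal (C * Real.exp (-A * Real.exp (-a))) :=
    (ENNReal.continuous_ofReal.comp (by continuity)).measurable
  rw [gumbelM, restrict_withDensity measurableSet_Iic,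
    lintegral_withDensity_eq_lintegral_mul _ gpdf_meas hmeas2]
  · have heq : ∀ a : ℝ, ENNReal.ofReal (gpdf a) * ENNReal.ofReal (C * Real.exp (-A * Real.exp (-a)))
        = ENNReal.ofReal (gpdf a * (C * Real.exp (-A * Real.exp (-a)))) := by
      intro a
      exact (ENNReal.ofReal_mul (gpdf_pos a).le).symm
    simp only [Pi.mul_apply, heq]
    rw [← ofReal_integral_eq_lintegral_ofReal]
    · congr 1
      simp only [real_eq A C _ hA]
      rw [MeasureTheory.integral_const_mul, gcore_integral (1 + A) h1A c]
    · have : IntegrableOn (fun x => C / (1 + A) *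
          ((1 + A) * Real.exp (-x) * Real.exp (-(1 + A) * Real.exp (-x)))) (Iic c) :=
        (gcore_integrableOn (1 + A) h1A c).const_mul _
      exact this.congr_fun (fun x _ => (real_eq A C x hA).symm) measurableSet_Iic
    · refine ae_of_all _ fun x => ?_
      exact mul_nonneg (gpdf_pos x).le (by positivity)

lemma gumbelM_Iic (c : ℝ) :
    gumbelM (Iic c) = ENNReal.ofReal (Real.exp (-Real.exp (-c))) := by
  have h := gumbel_lint 0 1 c le_rfl zero_le_one
  rw [← setLIntegral_one (Iic c)]
  calc ∫⁻ _ in Iic c, 1 ∂gumbelM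
      = ∫⁻ a in Iic c, ENNReal.ofReal (1 * Real.exp (-0 * Real.exp (-a))) ∂gumbelM := by
        apply lintegral_congr; intro a; norm_num
    _ = ENNReal.ofReal (1 / (1 + 0) * Real.exp (-(1 + 0) * Real.exp (-c))) := h
    _ = ENNReal.ofReal (Real.exp (-Real.exp (-c))) := by norm_num

instance gumbelM_prob : IsProbabilityMeasure gumbelM := by
  constructor
  have hU : (univ : Set ℝ) = ⋃ n : ℕ, Iic (n : ℝ) := by
    ext x; simp only [mem_univ, mem_iUnion, mem_Iic, true_iff]
    exact (exists_nat_ge x).imp fun n h => h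
  rw [hU]
  have hmono : Monotone fun n : ℕ => (Iic (n : ℝ)) := fun m n h =>
    Iic_subset_Iic.2 (by exact_mod_cast h)
  have ht := tendsto_measure_iUnion_atTop (μ := gumbelM) hmono
  have ht2 : Tendsto (fun n : ℕ => gumbelM (Iic (n : ℝ))) atTop
      (nhds (ENNReal.ofReal 1)) := by
    simp only [gumbelM_Iic]
    apply ENNReal.tendsto_ofReal
    have h1 : Tendsto (fun n : ℕ => -((n : ℝ))) atTop atBot :=
      tendsto_neg_atBot_iff.2 tendsto_natCast_atTop_atTop
    have h2 := Real.tendsto_exp_atBot.comp h1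
    have h3 : Tendsto (fun n : ℕ => -Real.exp (-(n:ℝ))) atTop (nhds 0) := by
      simpa using h2.neg
    have := (Real.continuous_exp.tendsto 0).comp h3
    simpa [Function.comp_def] using this
  simpa using tendsto_nhds_unique ht ht2
section Comb
open Finset

noncomputable def Zs {n : ℕ} (w : Fin n → ℝ) (t : Fin n) : ℝ :=
  ∑ u ∈ Finset.univ.filter (fun u => t ≤ u), Real.exp (w u)

noncomputable def Rprod {n : ℕ} (w : Fin n → ℝ) : ℝ :=
  ∏ t, Real.exp (w t) / Zs w t

lemma Zs_pos {n : ℕ} (w : Fin n → ℝ) (t : Fin n) : 0 < Zs w t := by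
  apply Finset.sum_pos (fun u _ => Real.exp_pos _)
  exact ⟨t, by simp⟩

lemma Zs_zero {n : ℕ} (w : Fin (n + 1) → ℝ) :
    Zs w 0 = ∑ u, Real.exp (w u) := by
  unfold Zs
  congr 1
  ext u
  simp [Fin.zero_le]

lemma Zs_succ {n : ℕ} (w : Fin (n + 1) → ℝ) (t : Fin n) :
    Zs w t.succ = Zs (fun i => w i.succ) t := by
  unfold Zs
  rw [Finset.sum_filter, Finset.sum_filter, Fin.sum_univ_succ]
  simp only [Fin.succ_le_succ_iff]
  have : ¬ (t.succ ≤ (0 : Fin (n + 1))) := by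
    simp [Fin.le_def]
  rw [if_neg this, zero_add]

lemma Rprod_succ {n : ℕ} (w : Fin (n + 1) → ℝ) :
    Rprod w = Real.exp (w 0) / (∑ u, Real.exp (w u)) * Rprod (fun i => w i.succ) := by
  unfold Rprod
  rw [Fin.prod_univ_succ, Zs_zero]
  congr 1
  exact Finset.prod_congr rfl fun t _ => by rw [Zs_succ]

lemma Rprod_nonneg {n : ℕ} (w : Fin n → ℝ) : 0 ≤ Rprod w :=
  Finset.prod_nonneg fun t _ => div_nonneg (Real.exp_pos _).le (Zs_pos w t).le

end Comb

lemma chain_iff {n : ℕ} (w : Fin (n + 1) → ℝ) (y : ℝ) (x : Fin (n + 1) → ℝ) :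
    ((∀ t t', t < t' → w t' + x t' < w t + x t) ∧ ∀ t, w t + x t < y)
      ↔ (w 0 + x 0 < y ∧
        ((∀ t t' : Fin n, t < t' → w t'.succ + x t'.succ < w t.succ + x t.succ) ∧
          ∀ t : Fin n, w t.succ + x t.succ < w 0 + x 0)) := by
  constructor
  · rintro ⟨h1, h2⟩
    exact ⟨h2 0, fun t t' h => h1 _ _ (Fin.succ_lt_succ_iff.2 h),
      fun t => h1 0 t.succ (Fin.succ_pos t)⟩
  · rintro ⟨h1, h2, h3⟩
    constructor
    · intro t t' hlt
      rcases Fin.eq_zero_or_eq_succ t' with rfl | ⟨v, rfl⟩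
      · exact absurd hlt (Fin.not_lt_zero t)
      · rcases Fin.eq_zero_or_eq_succ t with rfl | ⟨u, rfl⟩
        · exact h3 v
        · exact h2 u v (Fin.succ_lt_succ_iff.1 hlt)
    · intro t
      rcases Fin.eq_zero_or_eq_succ t with rfl | ⟨u, rfl⟩
      · exact h1
      · exact lt_trans (h3 u) h1

lemma meas_chain {n : ℕ} (w : Fin n → ℝ) :
    MeasurableSet {x : Fin n → ℝ | ∀ t t', t < t' → w t' + x t' < w t + x t} := by
  have : {x : Fin n → ℝ | ∀ t t', t < t' → w t' + x t' < w t + x t}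
      = ⋂ t, ⋂ t', ⋂ (_ : t < t'), {x | w t' + x t' < w t + x t} := by
    ext x; simp [Set.mem_iInter]
  rw [this]
  refine MeasurableSet.iInter fun t => MeasurableSet.iInter fun t' =>
    MeasurableSet.iInter fun _ => ?_
  exact measurableSet_lt ((measurable_pi_apply t').const_add _)
    ((measurable_pi_apply t).const_add _)

lemma meas_below {n : ℕ} (w : Fin n → ℝ) (y : ℝ) :
    MeasurableSet {x : Fin n → ℝ | ∀ t, w t + x t < y} := by
  have : {x : Fin n → ℝ | ∀ t, w t + x t < y} = ⋂ t, {x | w t + x t < y} := by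
    ext x; simp [Set.mem_iInter]
  rw [this]
  exact MeasurableSet.iInter fun t =>
    measurableSet_lt ((measurable_pi_apply t).const_add _) measurable_const
instance gumbelM_noAtoms : NullSingletonClass gumbelM := by
  constructor
  intro x
  exact withDensity_absolutelyContinuous _ _ (measure_singleton x)

lemma key (n : ℕ) : ∀ (w : Fin n → ℝ) (y : ℝ),
    Measure.pi (fun _ : Fin n => gumbelM)
      {x | (∀ t t', t < t' → w t' + x t' < w t + x t) ∧ (∀ t, w t + x t < y)}
      = ENNReal.ofReal (Rprod w * Real.exp (-(∑ t, Real.exp (w t)) * Real.exp (-y))) := by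
  induction n with
  | zero =>
    intro w y
    have h1 : {x : Fin 0 → ℝ |
        (∀ t t', t < t' → w t' + x t' < w t + x t) ∧ (∀ t, w t + x t < y)} = Set.univ := by
      ext x
      simp only [Set.mem_setOf_eq, Set.mem_univ, iff_true]
      exact ⟨fun t => t.elim0, fun t => t.elim0⟩
    rw [h1, measure_univ]
    simp [Rprod]
  | succ n ih =>
    intro w y
    have MP := measurePreserving_piFinSuccAbove (fun _ : Fin (n + 1) => gumbelM) 0
    set e := MeasurableEquiv.piFinSuccAbove (fun _ : Fin (n + 1) => ℝ) 0 with he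
    set tw : Fin n → ℝ := fun i => w i.succ with htw
    set B : Set (ℝ × (Fin n → ℝ)) :=
      {p | w 0 + p.1 < y ∧ ((∀ t t', t < t' → tw t' + p.2 t' < tw t + p.2 t) ∧
        ∀ t, tw t + p.2 t < w 0 + p.1)} with hB
    have hBmeas : MeasurableSet B := by
      have : B = {p : ℝ × (Fin n → ℝ) | w 0 + p.1 < y} ∩
          ((Prod.snd ⁻¹' {x2 : Fin n → ℝ | ∀ t t', t < t' → tw t' + x2 t' < tw t + x2 t}) ∩
            ⋂ t, {p : ℝ × (Fin n → ℝ) | tw t + p.2 t < w 0 + p.1}) := by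
        ext p
        simp only [hB, Set.mem_setOf_eq, Set.mem_inter_iff, Set.mem_preimage, Set.mem_iInter]
      rw [this]
      refine MeasurableSet.inter ?_ (MeasurableSet.inter ?_ (MeasurableSet.iInter fun t => ?_))
      · exact measurableSet_lt (measurable_fst.const_add _) measurable_const
      · exact (meas_chain tw).preimage measurable_snd
      · exact measurableSet_lt (((measurable_pi_apply t).comp measurable_snd).const_add _)
          (measurable_fst.const_add _)
    have hAB : {x : Fin (n + 1) → ℝ |
        (∀ t t', t < t' → w t' + x t' < w t + x t) ∧ (∀ t, w t + x t < y)} = e ⁻¹' B := by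
      ext x
      have hx : e x = (x 0, fun j => x j.succ) := by
        simp [he, MeasurableEquiv.piFinSuccAbove, Fin.removeNth]
        rfl
      rw [Set.mem_preimage, hx]
      simpa [hB, htw] using chain_iff w y x
    rw [hAB, MP.measure_preimage hBmeas.nullMeasurableSet, Measure.prod_apply hBmeas]
    have hslice : ∀ a : ℝ, (Measure.pi fun _ : Fin n => gumbelM) (Prod.mk a ⁻¹' B) =
        Set.indicator (Set.Iio (y - w 0))
          (fun a => ENNReal.ofReal (Rprod tw *
            Real.exp (-((∑ t, Real.exp (tw t)) * Real.exp (-w 0)) * Real.exp (-a)))) a := by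
      intro a
      have hexp2 : ∀ a : ℝ, -((∑ t, Real.exp (tw t)) * Real.exp (-w 0)) * Real.exp (-a)
          = -(∑ t, Real.exp (tw t)) * Real.exp (-(w 0 + a)) := by
        intro a; rw [neg_add, Real.exp_add]; ring
      by_cases h : a < y - w 0
      · rw [Set.indicator_of_mem (Set.mem_Iio.2 h)]
        have hset : Prod.mk a ⁻¹' B = {x2 : Fin n → ℝ |
            (∀ t t', t < t' → tw t' + x2 t' < tw t + x2 t) ∧ (∀ t, tw t + x2 t < w 0 + a)} := by
          ext x2
          simp only [hB, Set.mem_preimage, Set.mem_setOf_eq]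
          exact ⟨fun ⟨_, h2⟩ => h2, fun h2 => ⟨by linarith, h2⟩⟩
        rw [hset, ih tw (w 0 + a), hexp2]
      · rw [Set.indicator_of_notMem (by simpa using h)]
        have hset : Prod.mk a ⁻¹' B = ∅ := by
          ext x2
          simp only [hB, Set.mem_preimage, Set.mem_setOf_eq, Set.mem_empty_iff_false, iff_false]
          rintro ⟨h1, _⟩
          exact h (by linarith)
        rw [hset, measure_empty]
    rw [lintegral_congr hslice, lintegral_indicator measurableSet_Iio,
      setLIntegral_congr (Iio_ae_eq_Iic (μ := gumbelM) (a := y - w 0)),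
      gumbel_lint _ _ _ (by positivity) (Rprod_nonneg tw)]
    congr 1
    have hexp : Real.exp (w 0) * Real.exp (-w 0) = 1 := by
      rw [← Real.exp_add]; simp
    have hSsum : (∑ t : Fin (n + 1), Real.exp (w t))
        = Real.exp (w 0) + ∑ t : Fin n, Real.exp (tw t) := by
      rw [Fin.sum_univ_succ]
    have hSpos : (0:ℝ) < ∑ t : Fin (n + 1), Real.exp (w t) :=
      Finset.sum_pos (fun _ _ => Real.exp_pos _) ⟨0, Finset.mem_univ 0⟩
    have h1A : 1 + (∑ t : Fin n, Real.exp (tw t)) * Real.exp (-w 0)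
        = (∑ t : Fin (n + 1), Real.exp (w t)) * Real.exp (-w 0) := by
      rw [hSsum, add_mul, hexp]
    have harg : Real.exp (-w 0) * Real.exp (-(y - w 0)) = Real.exp (-y) := by
      rw [← Real.exp_add]; ring_nf
    rw [h1A, Rprod_succ w, ← htw]
    rw [show -((∑ t : Fin (n + 1), Real.exp (w t)) * Real.exp (-w 0)) * Real.exp (-(y - w 0))
        = (-∑ t : Fin (n + 1), Real.exp (w t)) * Real.exp (-y) by rw [← harg]; ring]
    rw [Real.exp_neg (w 0)]
    field_simp
lemma pi_chain (n : ℕ) (w : Fin n → ℝ) :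
    Measure.pi (fun _ : Fin n => gumbelM)
      {x | ∀ t t', t < t' → w t' + x t' < w t + x t} = ENNReal.ofReal (Rprod w) := by
  set A : ℕ → Set (Fin n → ℝ) := fun k =>
    {x | (∀ t t', t < t' → w t' + x t' < w t + x t) ∧ (∀ t, w t + x t < (k : ℝ))} with hA
  have hU : {x : Fin n → ℝ | ∀ t t', t < t' → w t' + x t' < w t + x t} = ⋃ k, A k := by
    ext x
    simp only [Set.mem_setOf_eq, Set.mem_iUnion, hA]
    constructor
    · intro h
      obtain ⟨M, hM⟩ := Set.Finite.bddAbove (Set.finite_range fun t => w t + x t)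
      obtain ⟨k, hk⟩ := exists_nat_gt M
      exact ⟨k, h, fun t => lt_of_le_of_lt (hM ⟨t, rfl⟩) hk⟩
    · rintro ⟨k, h, _⟩
      exact h
  have hmono : Monotone A := by
    intro k k' hkk x hx
    exact ⟨hx.1, fun t => lt_of_lt_of_le (hx.2 t) (by exact_mod_cast hkk)⟩
  rw [hU]
  have ht := tendsto_measure_iUnion_atTop (μ := Measure.pi (fun _ : Fin n => gumbelM)) hmono
  have ht2 : Tendsto (fun k : ℕ => Measure.pi (fun _ : Fin n => gumbelM) (A k)) atTop
      (nhds (ENNReal.ofReal (Rprod w))) := by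
    have hval : ∀ k : ℕ, Measure.pi (fun _ : Fin n => gumbelM) (A k)
        = ENNReal.ofReal (Rprod w * Real.exp (-(∑ t, Real.exp (w t)) * Real.exp (-(k : ℝ)))) :=
      fun k => key n w k
    simp only [hval]
    apply ENNReal.tendsto_ofReal
    have h1 : Tendsto (fun k : ℕ => -((k : ℝ))) atTop atBot :=
      tendsto_neg_atBot_iff.2 tendsto_natCast_atTop_atTop
    have h2 := Real.tendsto_exp_atBot.comp h1
    have h3 : Tendsto (fun k : ℕ => -(∑ t, Real.exp (w t)) * Real.exp (-(k : ℝ))) atTop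
        (nhds 0) := by
      have := h2.const_mul (-(∑ t, Real.exp (w t)))
      simpa [mul_comm] using this
    have h4 := (Real.continuous_exp.tendsto 0).comp h3
    have h5 : Tendsto (fun k : ℕ =>
        Real.exp (-(∑ t, Real.exp (w t)) * Real.exp (-(k : ℝ)))) atTop (nhds 1) := by
      simpa [Function.comp_def] using h4
    have := h5.const_mul (Rprod w)
    simpa using this
  exact tendsto_nhds_unique ht ht2

section Glue

open ProbabilityTheory

variable {Ω : Type*} [MeasurableSpace Ω] (μ : Measure Ω) [IsProbabilityMeasure μ]

lemma map_G {N : ℕ} (G : Fin N → Ω → ℝ) (hmeas : ∀ i, Measurable (G i))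
    (hcdf : ∀ i x, μ {ω | G i ω ≤ x} = ENNReal.ofReal (Real.exp (-Real.exp (-x))))
    (i : Fin N) : μ.map (G i) = gumbelM := by
  have : IsProbabilityMeasure (μ.map (G i)) := Measure.isProbabilityMeasure_map (hmeas i).aemeasurable
  refine MeasureTheory.Measure.ext_of_Iic _ _ fun a => ?_
  rw [Measure.map_apply (hmeas i) measurableSet_Iic, gumbelM_Iic]
  exact hcdf i a

lemma joint_law {N : ℕ} (G : Fin N → Ω → ℝ) (hmeas : ∀ i, Measurable (G i))
    (hindep : iIndepFun G μ)
    (hcdf : ∀ i x, μ {ω | G i ω ≤ x} = ENNReal.ofReal (Real.exp (-Real.exp (-x)))) :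
    μ.map (fun ω (i : Fin N) => G i ω) = Measure.pi (fun _ : Fin N => gumbelM) := by
  refine (Measure.pi_eq fun s hs => ?_).symm
  rw [Measure.map_apply (measurable_pi_lambda _ hmeas) (MeasurableSet.univ_pi hs)]
  have hpre : (fun ω (i : Fin N) => G i ω) ⁻¹' Set.pi Set.univ s = ⋂ i, G i ⁻¹' s i := by
    ext ω; simp [Set.mem_pi]
  rw [hpre, hindep.meas_iInter fun i => ⟨s i, hs i, rfl⟩]
  exact Finset.prod_congr rfl fun i _ => by
    rw [← Measure.map_apply (hmeas i) (hs i), map_G μ G hmeas hcdf i]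

lemma pi_perm {N : ℕ} (σ : Equiv.Perm (Fin N)) :
    (Measure.pi fun _ : Fin N => gumbelM).map (fun x t => x (σ t))
      = Measure.pi (fun _ : Fin N => gumbelM) := by
  have hTmmeas : Measurable (fun (x : Fin N → ℝ) t => x (σ t)) :=
    measurable_pi_lambda _ fun t => measurable_pi_apply _
  refine (Measure.pi_eq fun s hs => ?_).symm
  rw [Measure.map_apply hTmmeas (MeasurableSet.univ_pi hs)]
  have hpre : (fun (x : Fin N → ℝ) t => x (σ t)) ⁻¹' Set.pi Set.univ s
      = Set.pi Set.univ (fun j => s (σ.symm j)) := by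
    ext x
    simp only [Set.mem_preimage, Set.mem_pi, Set.mem_univ, true_implies]
    constructor
    · intro h j
      have := h (σ.symm j)
      rwa [Equiv.apply_symm_apply] at this
    · intro h t
      have := h (σ t)
      rwa [Equiv.symm_apply_apply] at this
  rw [hpre, Measure.pi_pi]
  exact Equiv.prod_comp σ.symm fun i => gumbelM (s i)

end Glue
lemma sum_filter_eq_Zs {N : ℕ} (s : Fin N → ℝ) (σ : Equiv.Perm (Fin N)) (t : Fin N) :
    ∑ j ∈ Finset.univ.filter (fun j : Fin N => ∀ t' : Fin N, t' < t → σ t' ≠ j),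
        Real.exp (s j)
      = Zs (fun u => s (σ u)) t := by
  unfold Zs
  refine Finset.sum_equiv σ.symm ?_ ?_
  · intro j
    simp only [Finset.mem_filter, Finset.mem_univ, true_and]
    constructor
    · intro h
      by_contra hc
      exact h (σ.symm j) (lt_of_not_ge hc) (σ.apply_symm_apply j)
    · intro h t' ht' hj
      have : t' = σ.symm j := by rw [← hj, Equiv.symm_apply_apply]
      rw [this] at ht'
      exact absurd h (not_le_of_gt ht')
  · intro j _
    show Real.exp (s j) = Real.exp (s (σ (σ.symm j)))
    rw [σ.apply_symm_apply]
end GumbelAux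

open MeasureTheory ProbabilityTheory Finset

/-- Gumbel top-k / sampling without replacement: the probability that the descending order of
the Gumbel-perturbed scores `s i + G i` is given by the permutation `σ` equals the probability
of drawing the ordered sequence `σ 0, σ 1, …` without replacement from the categorical
distribution with weights `exp (s i)`. -/
theorem gumbel_topk {Ω : Type*} [MeasurableSpace Ω] (μ : Measure Ω)
    [IsProbabilityMeasure μ] (N : ℕ) (s : Fin N → ℝ) (G : Fin N → Ω → ℝ)
    (hmeas : ∀ i, Measurable (G i))
    (hindep : iIndepFun G μ)
    (hcdf : ∀ i x, μ {ω | G i ω ≤ x} = ENNReal.ofReal (Real.exp (-Real.exp (-x))))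
    (σ : Equiv.Perm (Fin N)) :
    μ {ω | ∀ t t' : Fin N, t < t' → s (σ t') + G (σ t') ω < s (σ t) + G (σ t) ω} =
      ENNReal.ofReal (∏ t : Fin N,
        Real.exp (s (σ t)) /
          ∑ j ∈ Finset.univ.filter (fun j : Fin N => ∀ t' : Fin N, t' < t → σ t' ≠ j),
            Real.exp (s j)) := by
  have hjoint := joint_law μ G hmeas hindep hcdf
  have hA0meas : MeasurableSet
      {z : Fin N → ℝ | ∀ t t', t < t' → s (σ t') + z t' < s (σ t) + z t} :=
    meas_chain (fun u => s (σ u))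
  have hTmmeas : Measurable (fun (x : Fin N → ℝ) t => x (σ t)) :=
    measurable_pi_lambda _ fun t => measurable_pi_apply _
  have hTmeas : Measurable (fun ω (i : Fin N) => G i ω) := measurable_pi_lambda _ hmeas
  have hevent : {ω | ∀ t t' : Fin N, t < t' → s (σ t') + G (σ t') ω < s (σ t) + G (σ t) ω}
      = (fun ω (i : Fin N) => G i ω) ⁻¹' ((fun (x : Fin N → ℝ) t => x (σ t)) ⁻¹'
          {z | ∀ t t', t < t' → s (σ t') + z t' < s (σ t) + z t}) := rfl
  rw [hevent, ← Measure.map_apply hTmeas (hTmmeas hA0meas), hjoint,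
    ← Measure.map_apply hTmmeas hA0meas, pi_perm σ, pi_chain N (fun u => s (σ u))]
  congr 1
  unfold Rprod
  exact Finset.prod_congr rfl fun t _ => by rw [sum_filter_eq_Zs s σ t]
end

section
/- Order preservation of soft rank: For s ∈ ℝⁿ with ε > 0, let r̃_ε(s) = (ψ₁,...,ψₙ) be the Euclidean projection of -s/ε onto the permutahedron P((1,...,n)). If φ is the permutation sorting s in descending order (s_{φ(1)} ≥ ... ≥ s_{φ(n)}), then ψ_{φ(1)} ≤ ψ_{φ(2)} ≤ ... ≤ ψ_{φ(n)}; i.e., the soft rank preserves the ordering of the hard rank. -/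
/-- The permutahedron generated by `(1, …, n)`, inside Euclidean space `ℝⁿ`. -/
def permutahedron (n : ℕ) : Set (EuclideanSpace ℝ (Fin n)) :=
  convexHull ℝ {x | ∃ σ : Equiv.Perm (Fin n), ∀ i, x i = ((σ i : ℕ) : ℝ) + 1}

/-- Precomposition by a permutation, as a linear map on Euclidean space. -/
def permMap (n : ℕ) (τ : Equiv.Perm (Fin n)) :
    EuclideanSpace ℝ (Fin n) →ₗ[ℝ] EuclideanSpace ℝ (Fin n) where
  toFun x := WithLp.toLp 2 (fun i => x (τ i))
  map_add' x y := rfl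
  map_smul' c x := rfl

lemma permMap_apply (n : ℕ) (τ : Equiv.Perm (Fin n)) (x : EuclideanSpace ℝ (Fin n)) (i : Fin n) :
    permMap n τ x i = x (τ i) := rfl

lemma permutahedron_perm_invariant (n : ℕ) (τ : Equiv.Perm (Fin n))
    (x : EuclideanSpace ℝ (Fin n)) (hx : x ∈ permutahedron n) :
    permMap n τ x ∈ permutahedron n := by
  have h : permMap n τ x ∈ (permMap n τ) '' (permutahedron n) := ⟨x, hx, rfl⟩
  rw [permutahedron, (permMap n τ).image_convexHull] at h
  refine convexHull_mono ?_ h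
  rintro y ⟨w, ⟨σ, hσ⟩, rfl⟩
  exact ⟨τ.trans σ, fun i => by rw [permMap_apply, hσ]; rfl⟩

lemma swap_norm_sq (n : ℕ) (z ψ : EuclideanSpace ℝ (Fin n)) (a b : Fin n) :
    ‖permMap n (Equiv.swap a b) ψ - z‖ ^ 2
      = ‖ψ - z‖ ^ 2 + 2 * (ψ a - ψ b) * (z a - z b) := by
  rcases eq_or_ne a b with rfl | hab
  · have h : permMap n (Equiv.swap a a) ψ = ψ := by
      ext i; rw [permMap_apply, Equiv.swap_self]; rfl
    rw [h]; ring
  have key : ∀ (x : EuclideanSpace ℝ (Fin n)), ‖x‖ ^ 2 = ∑ i, (x i) ^ 2 := by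
    intro x
    rw [← Real.sqrt_sq (norm_nonneg x), EuclideanSpace.norm_eq]
    rw [Real.sq_sqrt (Finset.sum_nonneg fun i _ => sq_nonneg _),
        Real.sq_sqrt (Finset.sum_nonneg fun i _ => sq_nonneg _)]
    simp [Real.norm_eq_abs, sq_abs]
  have hva : permMap n (Equiv.swap a b) ψ a = ψ b := by
    rw [permMap_apply, Equiv.swap_apply_left]
  have hvb : permMap n (Equiv.swap a b) ψ b = ψ a := by
    rw [permMap_apply, Equiv.swap_apply_right]
  have hvo : ∀ i, i ≠ a → i ≠ b → permMap n (Equiv.swap a b) ψ i = ψ i := by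
    intro i hia hib
    rw [permMap_apply, Equiv.swap_apply_of_ne_of_ne hia hib]
  rw [key, key]
  have hdiff : ∀ i, (permMap n (Equiv.swap a b) ψ - z) i ^ 2 - ((ψ - z) i) ^ 2
      = (if i = a then (ψ b - z a) ^ 2 - (ψ a - z a) ^ 2 else 0)
        + (if i = b then (ψ a - z b) ^ 2 - (ψ b - z b) ^ 2 else 0) := by
    intro i
    rcases eq_or_ne i a with rfl | hia
    · rw [if_pos rfl, if_neg hab, PiLp.sub_apply, PiLp.sub_apply, hva]; ring
    rcases eq_or_ne i b with rfl | hib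
    · rw [if_neg hia, if_pos rfl, PiLp.sub_apply, PiLp.sub_apply, hvb]; ring
    · rw [if_neg hia, if_neg hib, PiLp.sub_apply, PiLp.sub_apply, hvo i hia hib]; ring
  have hsum : ∑ i, ((permMap n (Equiv.swap a b) ψ - z) i ^ 2 - ((ψ - z) i) ^ 2)
      = 2 * (ψ a - ψ b) * (z a - z b) := by
    simp only [hdiff, Finset.sum_add_distrib, Finset.sum_ite_eq', Finset.mem_univ, if_pos]
    ring
  rw [Finset.sum_sub_distrib] at hsum
  linarith [hsum]

/-- Order preservation of soft rank: if `ψ` is the Euclidean projection of `-s/ε` onto the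
permutahedron and `φ` sorts `s` in descending order, then the coordinates of `ψ` along `φ`
are increasing; i.e. the soft rank preserves the ordering of the hard rank. -/
theorem softRank_order_preserving (n : ℕ) (s : EuclideanSpace ℝ (Fin n)) (ε : ℝ) (hε : 0 < ε)
    (ψ : EuclideanSpace ℝ (Fin n)) (hψ : ψ ∈ permutahedron n)
    (hproj : ∀ y ∈ permutahedron n, ‖ψ - (-(ε⁻¹ • s))‖ ≤ ‖y - (-(ε⁻¹ • s))‖)
    (φ : Equiv.Perm (Fin n)) (hφ : ∀ i j : Fin n, i ≤ j → s (φ j) ≤ s (φ i)) :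
    ∀ i j : Fin n, i ≤ j → ψ (φ i) ≤ ψ (φ j) := by
  intro i j hij
  by_contra hlt
  push_neg at hlt
  set a := φ i with ha_def
  set b := φ j with hb_def
  set z : EuclideanSpace ℝ (Fin n) := -(ε⁻¹ • s) with hz
  set ψ' := permMap n (Equiv.swap a b) ψ with hψ'def
  have hψ'mem : ψ' ∈ permutahedron n := permutahedron_perm_invariant n _ ψ hψ
  have hza : z a = -(ε⁻¹ * s a) := by
    rw [hz, PiLp.neg_apply, PiLp.smul_apply, smul_eq_mul]
  have hzb : z b = -(ε⁻¹ * s b) := by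
    rw [hz, PiLp.neg_apply, PiLp.smul_apply, smul_eq_mul]
  have hs : s b ≤ s a := hφ i j hij
  have hzab : z a - z b ≤ 0 := by
    rw [hza, hzb]
    have := mul_le_mul_of_nonneg_left hs (le_of_lt (inv_pos.mpr hε))
    linarith
  have hnormsq : ‖ψ' - z‖ ^ 2 = ‖ψ - z‖ ^ 2 + 2 * (ψ a - ψ b) * (z a - z b) :=
    swap_norm_sq n z ψ a b
  have hle : ‖ψ' - z‖ ≤ ‖ψ - z‖ := by
    have h2 : 2 * (ψ a - ψ b) * (z a - z b) ≤ 0 :=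
      mul_nonpos_of_nonneg_of_nonpos (by linarith) hzab
    nlinarith [norm_nonneg (ψ' - z), norm_nonneg (ψ - z)]
  have heq : ‖ψ - z‖ = ‖ψ' - z‖ := le_antisymm (hproj ψ' hψ'mem) hle
  -- midpoint argument
  set m : EuclideanSpace ℝ (Fin n) := (1/2 : ℝ) • ψ + (1/2 : ℝ) • ψ' with hm_def
  have hmmem : m ∈ permutahedron n :=
    (convex_convexHull ℝ _) hψ hψ'mem (by norm_num) (by norm_num) (by norm_num)
  have hml : ‖ψ - z‖ ≤ ‖m - z‖ := hproj m hmmem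
  have hpar := parallelogram_law_with_norm ℝ (ψ - z) (ψ' - z)
  have hmz : m - z = (1/2 : ℝ) • ((ψ - z) + (ψ' - z)) := by
    rw [hm_def]; module
  have hmznorm : ‖m - z‖ = (1/2 : ℝ) * ‖(ψ - z) + (ψ' - z)‖ := by
    rw [hmz, norm_smul]; norm_num
  have hdiffeq : (ψ - z) - (ψ' - z) = ψ - ψ' := by abel
  rw [hdiffeq] at hpar
  have hzero : ‖ψ - ψ'‖ = 0 := by
    nlinarith [norm_nonneg (ψ - ψ'), norm_nonneg (m - z), norm_nonneg (ψ - z),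
      norm_nonneg ((ψ - z) + (ψ' - z))]
  have hpp : ψ = ψ' := sub_eq_zero.mp (norm_eq_zero.mp hzero)
  have hab : ψ a = ψ b := by
    have h1 : ψ' a = ψ b := by rw [hψ'def, permMap_apply, Equiv.swap_apply_left]
    rw [← h1, ← hpp]
  linarith
end

section
/- Isotonic regression via block averaging optimality condition: Let z ∈ ℝⁿ and suppose {1,...,n} is partitioned into consecutive blocks B₁,...,B_m. Define v ∈ ℝⁿ by vᵢ = (1/|B_k|)Σ_{j∈B_k} z_j for i ∈ B_k. If the block means are strictly decreasing (mean(B₁) > mean(B₂) > ... > mean(B_m)) and within each block B_k the vector v minimizes Σ_{j∈B_k}(x - z_j)² over constants x, then v is the unique minimizer of ‖v' - z‖² over the set {v' : v'₁ ≥ v'₂ ≥ ... ≥ v'ₙ} provided additionally that for each block B_k and each proper prefix P of B_k, the mean of z over P is at most the mean of z over B_k \ P. -/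
open Finset

/-- The mean of `z` over the set of indices `i` with `lo ≤ i < hi`. -/
noncomputable def intervalMean {n : ℕ} (z : Fin n → ℝ) (lo hi : ℕ) : ℝ :=
  (∑ j ∈ Finset.univ.filter (fun j : Fin n => lo ≤ (j : ℕ) ∧ (j : ℕ) < hi), z j) /
    (((hi - lo : ℕ) : ℝ))

noncomputable def extFn {n : ℕ} (z : Fin n → ℝ) : ℕ → ℝ :=
  fun j => if h : j < n then z ⟨j, h⟩ else 0

lemma extFn_sum_filter {n : ℕ} (z : Fin n → ℝ) {lo hi : ℕ} (hhi : hi ≤ n) :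
    ∑ j ∈ Finset.univ.filter (fun j : Fin n => lo ≤ (j : ℕ) ∧ (j : ℕ) < hi), z j
      = ∑ j ∈ Finset.Ico lo hi, extFn z j := by
  rw [Finset.sum_filter]
  have h1 : ∀ i : Fin n, (if lo ≤ (i : ℕ) ∧ (i : ℕ) < hi then z i else 0)
      = (fun j : ℕ => if lo ≤ j ∧ j < hi then extFn z j else 0) (i : ℕ) := by
    intro i
    simp only [extFn, i.isLt, dif_pos, Fin.eta]
  rw [Finset.sum_congr rfl (fun i _ => h1 i),
    Fin.sum_univ_eq_sum_range (fun j : ℕ => if lo ≤ j ∧ j < hi then extFn z j else 0) n,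
    ← Finset.sum_filter]
  congr 1
  ext j
  simp only [Finset.mem_filter, Finset.mem_range, Finset.mem_Ico]
  omega

lemma abel_nonneg (w g : ℕ → ℝ) (lo hi : ℕ)
    (hw : ∀ i j, lo ≤ i → i ≤ j → j < hi → w j ≤ w i)
    (hS : ∀ c, lo ≤ c → c ≤ hi → 0 ≤ ∑ j ∈ Finset.Ico lo c, g j)
    (hS0 : ∑ j ∈ Finset.Ico lo hi, g j = 0) :
    0 ≤ ∑ j ∈ Finset.Ico lo hi, w j * g j := by
  rcases le_or_gt hi lo with h | h
  · rw [Finset.Ico_eq_empty (by omega)]; simp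
  have key : ∀ c, lo + 1 ≤ c → c ≤ hi →
      w (c - 1) * (∑ j ∈ Finset.Ico lo c, g j) ≤ ∑ j ∈ Finset.Ico lo c, w j * g j := by
    intro c hc
    induction c, hc using Nat.le_induction with
    | base =>
      intro _
      simp [Nat.Ico_succ_singleton]
    | succ c hc ih =>
      intro hch
      have hch' : c ≤ hi := by omega
      have ihc := ih hch'
      rw [Finset.sum_Ico_succ_top (by omega : lo ≤ c),
        Finset.sum_Ico_succ_top (by omega : lo ≤ c)]
      have h1 : w c ≤ w (c - 1) := hw (c - 1) c (by omega) (by omega) (by omega)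
      have hSc := hS c (by omega) hch'
      have h2 : w c * (∑ j ∈ Finset.Ico lo c, g j) ≤
          w (c - 1) * (∑ j ∈ Finset.Ico lo c, g j) :=
        mul_le_mul_of_nonneg_right h1 hSc
      have h3 : c + 1 - 1 = c := by omega
      rw [h3, mul_add]
      linarith
  have := key hi (by omega) le_rfl
  rw [hS0] at this
  simpa using this

lemma tel_sum (B : ℕ → ℕ) (f : ℕ → ℝ) (m : ℕ)
    (hB : ∀ i j, i ≤ j → j ≤ m → B i ≤ B j) :
    ∑ j ∈ Finset.Ico (B 0) (B m), f j
      = ∑ k ∈ Finset.range m, ∑ j ∈ Finset.Ico (B k) (B (k + 1)), f j := by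
  induction m with
  | zero => simp
  | succ m ih =>
    rw [Finset.sum_range_succ, ← ih (fun i j hij hj => hB i j hij (by omega)),
      Finset.sum_Ico_consecutive _ (hB 0 m (by omega) (by omega)) (hB m (m + 1) (by omega) le_rfl)]

/-- Isotonic regression via block averaging (PAV optimality): if `v` is piecewise constant on
consecutive blocks `[b k, b (k+1))` with value the block mean of `z`, the block means are
strictly decreasing, `v` minimizes the within-block squared error among constants, and every
proper prefix of each block has mean at most the mean of the rest of the block, then `v` is
the unique minimizer of `‖v' - z‖²` over decreasing vectors `v'`. -/
theorem isotonic_block_averaging {n m : ℕ} (z v : Fin n → ℝ)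
    (b : Fin (m + 1) → ℕ) (hb0 : b 0 = 0) (hbn : b (Fin.last m) = n) (hmono : StrictMono b)
    (hv : ∀ k : Fin m, ∀ i : Fin n, b k.castSucc ≤ (i : ℕ) → (i : ℕ) < b k.succ →
      v i = intervalMean z (b k.castSucc) (b k.succ))
    (hdec : ∀ k l : Fin m, k < l →
      intervalMean z (b l.castSucc) (b l.succ) < intervalMean z (b k.castSucc) (b k.succ))
    (hmin : ∀ k : Fin m, ∀ i : Fin n, b k.castSucc ≤ (i : ℕ) → (i : ℕ) < b k.succ →
      ∀ x : ℝ,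
        ∑ j ∈ Finset.univ.filter
            (fun j : Fin n => b k.castSucc ≤ (j : ℕ) ∧ (j : ℕ) < b k.succ), (v i - z j) ^ 2 ≤
          ∑ j ∈ Finset.univ.filter
            (fun j : Fin n => b k.castSucc ≤ (j : ℕ) ∧ (j : ℕ) < b k.succ), (x - z j) ^ 2)
    (hprefix : ∀ k : Fin m, ∀ c : ℕ, b k.castSucc < c → c < b k.succ →
      intervalMean z (b k.castSucc) c ≤ intervalMean z c (b k.succ)) :
    (∀ i j : Fin n, i ≤ j → v j ≤ v i) ∧
      ∀ v' : Fin n → ℝ, (∀ i j : Fin n, i ≤ j → v' j ≤ v' i) → v' ≠ v →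
        ∑ i, (v i - z i) ^ 2 < ∑ i, (v' i - z i) ^ 2 := by
  classical
  have hble : ∀ k : Fin (m + 1), b k ≤ n := fun k => hbn ▸ hmono.monotone (Fin.le_last k)
  -- every index lies in some block
  have hblock : ∀ i : Fin n, ∃ k : Fin m, b k.castSucc ≤ (i : ℕ) ∧ (i : ℕ) < b k.succ := by
    intro i
    set s : Finset (Fin (m + 1)) := Finset.univ.filter (fun k => b k ≤ (i : ℕ)) with hs
    have h0 : (0 : Fin (m + 1)) ∈ s := by simp [hs, hb0]
    have hne : s.Nonempty := ⟨0, h0⟩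
    set k₀ := s.max' hne with hk₀
    have hk₀mem : k₀ ∈ s := s.max'_mem hne
    have hk₀le : b k₀ ≤ (i : ℕ) := by
      have := hk₀mem
      rw [hs, Finset.mem_filter] at this
      exact this.2
    have hk₀lt : (k₀ : ℕ) < m := by
      by_contra h
      have hlast : k₀ = Fin.last m := by
        apply Fin.ext
        have := k₀.isLt
        simp only [Fin.val_last]
        omega
      rw [hlast, hbn] at hk₀le
      exact absurd i.isLt (by omega)
    refine ⟨⟨(k₀ : ℕ), hk₀lt⟩, ?_, ?_⟩
    · have hcs : ((⟨(k₀ : ℕ), hk₀lt⟩ : Fin m).castSucc) = k₀ := by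
        apply Fin.ext; simp
      rw [hcs]; exact hk₀le
    · by_contra h
      push_neg at h
      have hmem : (⟨(k₀ : ℕ), hk₀lt⟩ : Fin m).succ ∈ s := by
        rw [hs, Finset.mem_filter]
        exact ⟨Finset.mem_univ _, h⟩
      have hle := s.le_max' _ hmem
      rw [← hk₀] at hle
      have := Fin.le_def.mp hle
      simp only [Fin.val_succ] at this
      omega
  have hμanti : ∀ k l : Fin m, k ≤ l →
      intervalMean z (b l.castSucc) (b l.succ) ≤ intervalMean z (b k.castSucc) (b k.succ) := by
    intro k l hkl
    rcases eq_or_lt_of_le hkl with h | h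
    · rw [h]
    · exact le_of_lt (hdec k l h)
  have part1 : ∀ i j : Fin n, i ≤ j → v j ≤ v i := by
    intro i j hij
    obtain ⟨ki, hki1, hki2⟩ := hblock i
    obtain ⟨kj, hkj1, hkj2⟩ := hblock j
    have hij' : (i : ℕ) ≤ (j : ℕ) := hij
    have hkij : ki ≤ kj := by
      by_contra h
      push_neg at h
      have h1 : (kj.succ : ℕ) ≤ (ki.castSucc : ℕ) := by
        have := Fin.lt_def.mp h
        simp only [Fin.val_succ, Fin.coe_castSucc]
        omega
      have h2 := hmono.monotone (show kj.succ ≤ ki.castSucc from Fin.le_def.mpr h1)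
      omega
    rw [hv ki i hki1 hki2, hv kj j hkj1 hkj2]
    exact hμanti ki kj hkij
  refine ⟨part1, ?_⟩
  intro v' hv' hne
  set Z := extFn z with hZ
  set V := extFn v with hV
  set V' := extFn v' with hV'
  -- the cross term is nonnegative
  have hcross : 0 ≤ ∑ i, (v' i - v i) * (v i - z i) := by
    have hconv : ∑ i, (v' i - v i) * (v i - z i)
        = ∑ j ∈ Finset.range n, (V' j - V j) * (V j - Z j) := by
      rw [← Fin.sum_univ_eq_sum_range (fun j => (V' j - V j) * (V j - Z j)) n]
      apply Finset.sum_congr rfl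
      intro i _
      simp [hZ, hV, hV', extFn, i.isLt]
    set B : ℕ → ℕ := fun k => b ⟨min k m, by omega⟩ with hBdef
    have hBmono : ∀ i j, i ≤ j → j ≤ m → B i ≤ B j := by
      intro i j hij hj
      apply hmono.monotone
      rw [Fin.le_def]
      simp only
      omega
    have hB0 : B 0 = 0 := by
      rw [hBdef]
      simp only
      rw [show (⟨min 0 m, by omega⟩ : Fin (m + 1)) = 0 from Fin.ext (by simp)]
      exact hb0
    have hBm : B m = n := by
      rw [hBdef]
      simp only
      rw [show (⟨min m m, by omega⟩ : Fin (m + 1)) = Fin.last m from Fin.ext (by simp [Fin.last])]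
      exact hbn
    rw [hconv, Finset.range_eq_Ico, show (0 : ℕ) = B 0 from hB0.symm, show n = B m from hBm.symm,
      tel_sum B _ m hBmono]
    apply Finset.sum_nonneg
    intro k hk
    rw [Finset.mem_range] at hk
    set K : Fin m := ⟨k, hk⟩ with hK
    have hBk : B k = b K.castSucc := by
      rw [hBdef]
      simp only
      congr 1
      apply Fin.ext
      simp only [Fin.coe_castSucc, hK]
      omega
    have hBk1 : B (k + 1) = b K.succ := by
      rw [hBdef]
      simp only
      congr 1
      apply Fin.ext
      simp only [Fin.val_succ, hK]
      omega
    rw [hBk, hBk1]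
    set lo := b K.castSucc with hlo
    set hi := b K.succ with hhi
    have hlohi : lo < hi := hmono (Fin.castSucc_lt_succ (i := K))
    have hhin : hi ≤ n := hble K.succ
    have hcard : ((hi - lo : ℕ) : ℝ) ≠ 0 := Nat.cast_ne_zero.mpr (by omega)
    set μ := intervalMean z lo hi with hμ
    have hμsum : ∑ j ∈ Finset.Ico lo hi, Z j = ((hi - lo : ℕ) : ℝ) * μ := by
      rw [hμ, intervalMean, ← extFn_sum_filter z hhin]
      field_simp
    have hVμ : ∀ j ∈ Finset.Ico lo hi, V j = μ := by
      intro j hj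
      rw [Finset.mem_Ico] at hj
      have hjn : j < n := lt_of_lt_of_le hj.2 hhin
      have := hv K ⟨j, hjn⟩ hj.1 hj.2
      simpa [hV, extFn, hjn] using this
    have hS0 : ∑ j ∈ Finset.Ico lo hi, (μ - Z j) = 0 := by
      rw [Finset.sum_sub_distrib, Finset.sum_const, Nat.card_Ico, hμsum, nsmul_eq_mul]
      ring
    have hSpre : ∀ c, lo ≤ c → c ≤ hi → 0 ≤ ∑ j ∈ Finset.Ico lo c, (μ - Z j) := by
      intro c hc1 hc2
      rcases eq_or_lt_of_le hc1 with h | hc1'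
      · rw [← h]; simp
      rcases eq_or_lt_of_le hc2 with h | hc2'
      · rw [h, hS0]
      have hp := hprefix K c hc1' hc2'
      rw [← hlo, ← hhi] at hp
      rw [intervalMean, intervalMean, extFn_sum_filter z (le_trans (le_of_lt hc2') hhin),
        extFn_sum_filter z hhin, ← hZ] at hp
      have hsplit : (∑ j ∈ Finset.Ico lo c, Z j) + (∑ j ∈ Finset.Ico c hi, Z j)
          = ∑ j ∈ Finset.Ico lo hi, Z j :=
        Finset.sum_Ico_consecutive _ (le_of_lt hc1') (le_of_lt hc2')
      rw [Finset.sum_sub_distrib, Finset.sum_const, Nat.card_Ico, nsmul_eq_mul]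
      set p := ∑ j ∈ Finset.Ico lo c, Z j with hpdef
      set s := ∑ j ∈ Finset.Ico c hi, Z j with hsdef
      have ha : (0 : ℝ) < ((c - lo : ℕ) : ℝ) := Nat.cast_pos.mpr (by omega)
      have hb' : (0 : ℝ) < ((hi - c : ℕ) : ℝ) := Nat.cast_pos.mpr (by omega)
      rw [div_le_div_iff₀ ha hb'] at hp
      have hcast : ((hi - lo : ℕ) : ℝ) = ((c - lo : ℕ) : ℝ) + ((hi - c : ℕ) : ℝ) := by
        have h1 : hi - lo = (c - lo) + (hi - c) := by omega
        rw [h1]; push_cast; ring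
      have htot : p + s = ((hi - lo : ℕ) : ℝ) * μ := by rw [← hμsum]; exact hsplit
      have hT : (0 : ℝ) < ((hi - lo : ℕ) : ℝ) := by rw [hcast]; linarith
      have h2 : p * ((hi - lo : ℕ) : ℝ) ≤ (((c - lo : ℕ) : ℝ) * μ) * ((hi - lo : ℕ) : ℝ) := by
        calc p * ((hi - lo : ℕ) : ℝ)
            = p * (((c - lo : ℕ) : ℝ) + ((hi - c : ℕ) : ℝ)) := by rw [hcast]
          _ ≤ ((c - lo : ℕ) : ℝ) * (p + s) := by nlinarith [hp]
          _ = ((c - lo : ℕ) : ℝ) * (((hi - lo : ℕ) : ℝ) * μ) := by rw [htot]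
          _ = (((c - lo : ℕ) : ℝ) * μ) * ((hi - lo : ℕ) : ℝ) := by ring
      have h3 := (mul_le_mul_iff_of_pos_right hT).mp h2
      linarith
    have habel := abel_nonneg V' (fun j => μ - Z j) lo hi ?_ hSpre hS0
    · have heq : ∑ j ∈ Finset.Ico lo hi, (V' j - V j) * (V j - Z j)
          = (∑ j ∈ Finset.Ico lo hi, V' j * (μ - Z j))
            - μ * ∑ j ∈ Finset.Ico lo hi, (μ - Z j) := by
        rw [Finset.mul_sum, ← Finset.sum_sub_distrib]
        apply Finset.sum_congr rfl
        intro j hj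
        rw [hVμ j hj]
        ring
      rw [heq, hS0]
      simpa using habel
    · intro i j h1 h2 h3
      have hjn : j < n := lt_of_lt_of_le h3 hhin
      have hin : i < n := by omega
      have := hv' ⟨i, hin⟩ ⟨j, hjn⟩ (Fin.mk_le_mk.mpr h2)
      simpa [hV', extFn, hin, hjn] using this
  -- combine
  have hsq : 0 < ∑ i, (v' i - v i) ^ 2 := by
    obtain ⟨i0, hi0⟩ := Function.ne_iff.mp hne
    have hne0 : v' i0 - v i0 ≠ 0 := sub_ne_zero.mpr hi0
    exact Finset.sum_pos' (fun i _ => sq_nonneg _)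
      ⟨i0, Finset.mem_univ _, lt_of_le_of_ne (sq_nonneg _) (Ne.symm (pow_ne_zero 2 hne0))⟩
  have hexp : ∑ i, (v' i - z i) ^ 2
      = ∑ i, (v' i - v i) ^ 2 + 2 * ∑ i, (v' i - v i) * (v i - z i) + ∑ i, (v i - z i) ^ 2 := by
    rw [Finset.mul_sum, ← Finset.sum_add_distrib, ← Finset.sum_add_distrib]
    apply Finset.sum_congr rfl
    intro i _
    ring
  linarith
end
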